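/- arXiv:1907.01736 — 4 statements merged into one kernel-verified Lean document; each statement's English description precedes it below -/
import Mathlib

section
/- (Sklar's theorem, existence direction) Let m ≥ 2 and let μ be a probability measure on ℝ^m with joint distribution function F(t) = μ{x : x_i ≤ t_i for all i} and marginal distribution functions F_i(s) = μ{x : x_i ≤ s}. Then there exists an m-copula C : [0,1]^m → [0,1] (grounded, with uniform margins, and m-increasing) such that for every t ∈ ℝ^m, F(t_1,…,t_m) = C(F_1(t_1),…,F_m(t_m)). -/
open Finset MeasureTheory

/-- `C` is grounded on `[0,1]^m`: it vanishes whenever some coordinate is `0`. -/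
def Grounded (m : ℕ) (C : (Fin m → ℝ) → ℝ) : Prop :=
  ∀ u : Fin m → ℝ, (∀ i, u i ∈ Set.Icc (0 : ℝ) 1) → (∃ i, u i = 0) → C u = 0

/-- `C` has uniform margins: `C(1,…,1,uᵢ,1,…,1) = uᵢ`. -/
def UniformMargins (m : ℕ) (C : (Fin m → ℝ) → ℝ) : Prop :=
  ∀ i : Fin m, ∀ s ∈ Set.Icc (0 : ℝ) 1, C (Function.update (fun _ => (1 : ℝ)) i s) = s

/-- `C` is `m`-increasing: every `C`-volume of a box `[u, v] ⊆ [0,1]^m` is nonnegative. -/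
def MIncreasing (m : ℕ) (C : (Fin m → ℝ) → ℝ) : Prop :=
  ∀ u v : Fin m → ℝ, (∀ i, u i ∈ Set.Icc (0 : ℝ) 1) → (∀ i, v i ∈ Set.Icc (0 : ℝ) 1) →
    (∀ i, u i ≤ v i) →
    0 ≤ ∑ S : Finset (Fin m), (-1 : ℝ) ^ S.card * C (fun i => if i ∈ S then u i else v i)

open ProbabilityTheory Set Filter Function
open scoped ENNReal Topology

namespace SklarAux

variable (ρ : Measure ℝ) [IsProbabilityMeasure ρ]

/-- Left limit of the cdf. -/
noncomputable def Fl (ρ : Measure ℝ) : ℝ → ℝ := Function.leftLim (cdf ρ)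

lemma Fl_le (s : ℝ) : Fl ρ s ≤ cdf ρ s := (monotone_cdf ρ).leftLim_le le_rfl

lemma le_Fl {s t : ℝ} (h : s < t) : cdf ρ s ≤ Fl ρ t := (monotone_cdf ρ).le_leftLim h

lemma Fl_mono : Monotone (Fl ρ) := by
  intro s t hst
  rcases eq_or_lt_of_le hst with rfl | h
  · exact le_rfl
  · exact (Fl_le ρ s).trans (le_Fl ρ h)

lemma Fl_nonneg (s : ℝ) : 0 ≤ Fl ρ s :=
  ge_of_tendsto ((monotone_cdf ρ).tendsto_leftLim s)
    (Eventually.of_forall fun x => cdf_nonneg ρ x)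

lemma meas_Iic (x : ℝ) : ρ (Set.Iic x) = ENNReal.ofReal (cdf ρ x) := (ofReal_cdf ρ x).symm

lemma meas_singleton (x : ℝ) : ρ {x} = ENNReal.ofReal (cdf ρ x - Fl ρ x) := by
  conv_lhs => rw [← measure_cdf ρ]
  exact (cdf ρ).measure_singleton x

lemma meas_Iio (x : ℝ) : ρ (Set.Iio x) = ENNReal.ofReal (Fl ρ x) := by
  have h : ρ (Set.Iic x \ {x}) = ρ (Set.Iic x) - ρ {x} :=
    measure_diff (by simp) (measurableSet_singleton x).nullMeasurableSet (measure_ne_top ρ _)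
  rw [Iic_diff_right] at h
  rw [h, meas_Iic, meas_singleton, ← ENNReal.ofReal_sub _ (sub_nonneg.2 (Fl_le ρ x))]
  congr 1
  ring

lemma meas_Ioc (a b : ℝ) : ρ (Set.Ioc a b) = ENNReal.ofReal (cdf ρ b - cdf ρ a) := by
  conv_lhs => rw [← measure_cdf ρ]
  exact (cdf ρ).measure_Ioc a b

lemma meas_Ioo (a b : ℝ) : ρ (Set.Ioo a b) = ENNReal.ofReal (Fl ρ b - cdf ρ a) := by
  conv_lhs => rw [← measure_cdf ρ]
  exact (cdf ρ).measure_Ioo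

/-- The "flat part" of the cdf to the right of `t` is null. -/
lemma flat_null (t : ℝ) : ρ {s | t < s ∧ cdf ρ s ≤ cdf ρ t} = 0 := by
  set N := {s : ℝ | t < s ∧ cdf ρ s ≤ cdf ρ t} with hN
  rcases eq_empty_or_nonempty N with h | h
  · simp [h]
  by_cases hb : BddAbove N
  · set b := sSup N with hbdef
    by_cases hbN : cdf ρ b ≤ cdf ρ t
    · refine measure_mono_null (?_ : N ⊆ Set.Ioc t b) ?_
      · exact fun s hs => ⟨hs.1, le_csSup hb hs⟩
      · rw [meas_Ioc, ENNReal.ofReal_eq_zero.2 (by linarith)]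
    · push_neg at hbN
      have hFlb : Fl ρ b ≤ cdf ρ t := by
        refine le_of_tendsto ((monotone_cdf ρ).tendsto_leftLim b) ?_
        filter_upwards [self_mem_nhdsWithin] with s hs
        obtain ⟨x, hxN, hsx⟩ := exists_lt_of_lt_csSup h hs
        exact (monotone_cdf ρ hsx.le).trans hxN.2
      refine measure_mono_null (?_ : N ⊆ Set.Ioo t b) ?_
      · intro s hs
        refine ⟨hs.1, lt_of_le_of_ne (le_csSup hb hs) fun he => ?_⟩
        rw [he] at hs
        linarith [hs.2]
      · rw [meas_Ioo, ENNReal.ofReal_eq_zero.2 (by linarith)]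
  · have hall : ∀ s, cdf ρ s ≤ cdf ρ t := by
      intro s
      obtain ⟨n, hnN, hn⟩ := not_bddAbove_iff.mp hb s
      exact (monotone_cdf ρ hn.le).trans hnN.2
    have h1 : (1 : ℝ) ≤ cdf ρ t :=
      le_of_tendsto (tendsto_cdf_atTop ρ) (Eventually.of_forall hall)
    have hIic : ρ (Set.Iic t) = 1 := by
      rw [meas_Iic]
      have : cdf ρ t = 1 := le_antisymm (cdf_le_one ρ t) h1
      rw [this, ENNReal.ofReal_one]
    have hIoi : ρ (Set.Ioi t) = 0 := by
      have hc := measure_compl (measurableSet_Iic (a := t)) (measure_ne_top ρ _)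
      rw [compl_Iic, hIic, measure_univ] at hc
      simpa using hc
    exact measure_mono_null (fun s hs => hs.1) hIoi

/-- Explicit formula for the inner (conditional on `s`) measure in the
distributional transform. -/
noncomputable def hfun (ρ : Measure ℝ) (u : ℝ) (s : ℝ) : ℝ≥0∞ :=
  if cdf ρ s ≤ u then 1
  else if Fl ρ s ≤ u then ENNReal.ofReal ((u - Fl ρ s) / (cdf ρ s - Fl ρ s))
  else 0

lemma hfun_measurable (u : ℝ) : Measurable (hfun ρ u) := by
  have h1 : Measurable (cdf ρ) := (monotone_cdf ρ).measurable
  have h2 : Measurable (Fl ρ) := (Fl_mono ρ).measurable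
  exact Measurable.ite (measurableSet_le h1 measurable_const)
    measurable_const <|
    Measurable.ite (measurableSet_le h2 measurable_const)
      (ENNReal.measurable_ofReal.comp ((measurable_const.sub h2).div (h1.sub h2)))
      measurable_const

lemma hfun_of_le {u s : ℝ} (h : cdf ρ s ≤ u) : hfun ρ u s = 1 := if_pos h

lemma hfun_of_mid {u s : ℝ} (h1 : ¬ cdf ρ s ≤ u) (h2 : Fl ρ s ≤ u) :
    hfun ρ u s = ENNReal.ofReal ((u - Fl ρ s) / (cdf ρ s - Fl ρ s)) := by
  rw [hfun, if_neg h1, if_pos h2]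

lemma hfun_of_gt {u s : ℝ} (h1 : ¬ cdf ρ s ≤ u) (h2 : ¬ Fl ρ s ≤ u) :
    hfun ρ u s = 0 := by
  rw [hfun, if_neg h1, if_neg h2]

lemma inner_eq (u s : ℝ) :
    (volume.restrict (Set.Icc (0:ℝ) 1)) {v | Fl ρ s + v * (cdf ρ s - Fl ρ s) ≤ u}
      = hfun ρ u s := by
  have hΔ : 0 ≤ cdf ρ s - Fl ρ s := sub_nonneg.2 (Fl_le ρ s)
  rw [Measure.restrict_apply' measurableSet_Icc, hfun]
  split_ifs with h1 h2
  · have he : {v : ℝ | Fl ρ s + v * (cdf ρ s - Fl ρ s) ≤ u} ∩ Set.Icc 0 1 = Set.Icc 0 1 := by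
      refine inter_eq_right.mpr fun v hv => ?_
      have hmul : v * (cdf ρ s - Fl ρ s) ≤ 1 * (cdf ρ s - Fl ρ s) :=
        mul_le_mul_of_nonneg_right hv.2 hΔ
      simp only [mem_setOf_eq]
      nlinarith
    rw [he, Real.volume_Icc]
    norm_num
  · push_neg at h1
    have hd : 0 < cdf ρ s - Fl ρ s := by linarith
    have hc1 : (u - Fl ρ s) / (cdf ρ s - Fl ρ s) < 1 := (div_lt_one hd).2 (by linarith)
    have hc0 : 0 ≤ (u - Fl ρ s) / (cdf ρ s - Fl ρ s) := div_nonneg (by linarith) hd.le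
    have he : {v : ℝ | Fl ρ s + v * (cdf ρ s - Fl ρ s) ≤ u} ∩ Set.Icc 0 1 =
        Set.Icc 0 ((u - Fl ρ s) / (cdf ρ s - Fl ρ s)) := by
      ext v
      simp only [Set.mem_inter_iff, Set.mem_setOf_eq, Set.mem_Icc]
      constructor
      · rintro ⟨hle, hv0, _⟩
        exact ⟨hv0, (le_div_iff₀ hd).2 (by linarith)⟩
      · rintro ⟨hv0, hvc⟩
        have hvd : v * (cdf ρ s - Fl ρ s) ≤ u - Fl ρ s := (le_div_iff₀ hd).1 hvc
        exact ⟨by linarith, hv0, by linarith⟩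
    rw [he, Real.volume_Icc, sub_zero]
  · push_neg at h1 h2
    have he : {v : ℝ | Fl ρ s + v * (cdf ρ s - Fl ρ s) ≤ u} ∩ Set.Icc 0 1 = ∅ := by
      refine eq_empty_iff_forall_notMem.2 fun v ⟨hle, hv0, _⟩ => ?_
      simp only [mem_setOf_eq] at hle
      nlinarith [mul_nonneg hv0 hΔ]
    rw [he]
    simp

lemma unif {u : ℝ} (h0 : 0 ≤ u) (h1 : u ≤ 1) :
    ∫⁻ s, hfun ρ u s ∂ρ = ENNReal.ofReal u := by
  by_cases hat : ∃ a, Fl ρ a ≤ u ∧ u < cdf ρ a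
  · obtain ⟨a, haF, haC⟩ := hat
    have hd : 0 < cdf ρ a - Fl ρ a := by linarith
    rw [← lintegral_add_compl (hfun ρ u) (measurableSet_Iio (a := a)), compl_Iio]
    have hIio : ∫⁻ s in Set.Iio a, hfun ρ u s ∂ρ = ENNReal.ofReal (Fl ρ a) := by
      have hc1 : ∀ᵐ (s : ℝ) ∂ρ, s ∈ Set.Iio a → hfun ρ u s = (1 : ℝ≥0∞) :=
        Eventually.of_forall fun s hs => hfun_of_le ρ ((le_Fl ρ hs).trans haF)
      rw [setLIntegral_congr_fun_ae measurableSet_Iio hc1,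
        setLIntegral_const, one_mul, meas_Iio]
    have hIci : ∫⁻ s in Ici a, hfun ρ u s ∂ρ = ENNReal.ofReal (u - Fl ρ a) := by
      rw [← Set.Ioi_insert, ← Set.singleton_union, lintegral_union measurableSet_Ioi
        (by simp [Set.disjoint_singleton_left])]
      have h2 : ∫⁻ s in Set.Ioi a, hfun ρ u s ∂ρ = 0 := by
        have hc0 : ∀ᵐ (s : ℝ) ∂ρ, s ∈ Set.Ioi a → hfun ρ u s = (0 : ℝ≥0∞) := by
          refine Eventually.of_forall fun s hs => ?_
          have hFl : u < Fl ρ s := lt_of_lt_of_le haC (le_Fl ρ hs)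
          exact hfun_of_gt ρ (by linarith [Fl_le ρ s]) (by linarith)
        rw [setLIntegral_congr_fun_ae measurableSet_Ioi hc0, lintegral_zero]
      rw [h2, add_zero, lintegral_singleton, meas_singleton]
      have hval : hfun ρ u a = ENNReal.ofReal ((u - Fl ρ a) / (cdf ρ a - Fl ρ a)) :=
        hfun_of_mid ρ (by linarith) haF
      rw [hval, ← ENNReal.ofReal_mul (div_nonneg (by linarith) hd.le),
        div_mul_cancel₀ _ hd.ne']
    rw [hIio, hIci, ← ENNReal.ofReal_add (Fl_nonneg ρ a) (by linarith)]
    congr 1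
    ring
  · push_neg at hat
    by_cases hA : ∃ s, cdf ρ s ≤ u
    · by_cases hb : BddAbove {s : ℝ | cdf ρ s ≤ u}
      · set a := sSup {s : ℝ | cdf ρ s ≤ u} with hadef
        have hFla : Fl ρ a ≤ u := by
          refine le_of_tendsto ((monotone_cdf ρ).tendsto_leftLim a) ?_
          filter_upwards [self_mem_nhdsWithin] with s hs
          obtain ⟨x, hxA, hsx⟩ := exists_lt_of_lt_csSup hA hs
          exact (monotone_cdf ρ hsx.le).trans hxA
        have hca : cdf ρ a ≤ u := hat a hFla
        have hua : u ≤ cdf ρ a := by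
          refine ge_of_tendsto (((cdf ρ).right_continuous a).tendsto.mono_left
            (nhdsWithin_mono a Set.Ioi_subset_Ici_self)) ?_
          filter_upwards [self_mem_nhdsWithin] with s hs
          by_contra hcon
          push_neg at hcon
          exact absurd (le_csSup hb hcon.le) (not_le.2 hs)
        rw [← lintegral_add_compl (hfun ρ u) (measurableSet_Iic (a := a)), compl_Iic]
        have hI1 : ∫⁻ s in Set.Iic a, hfun ρ u s ∂ρ = ENNReal.ofReal u := by
          have hc1 : ∀ᵐ (s : ℝ) ∂ρ, s ∈ Set.Iic a → hfun ρ u s = (1 : ℝ≥0∞) :=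
            Eventually.of_forall fun s hs => hfun_of_le ρ ((monotone_cdf ρ hs).trans hca)
          rw [setLIntegral_congr_fun_ae measurableSet_Iic hc1,
            setLIntegral_const, one_mul, meas_Iic, le_antisymm hca hua]
        have hI2 : ∫⁻ s in Set.Ioi a, hfun ρ u s ∂ρ = 0 := by
          have hc0 : ∀ᵐ (s : ℝ) ∂ρ, s ∈ Set.Ioi a → hfun ρ u s = (0 : ℝ≥0∞) := by
            refine Eventually.of_forall fun s hs => ?_
            have hcs : ¬ cdf ρ s ≤ u := fun hcon =>
              absurd (le_csSup hb hcon) (not_le.2 hs)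
            exact hfun_of_gt ρ hcs (fun hcon => hcs (hat s hcon))
          rw [setLIntegral_congr_fun_ae measurableSet_Ioi hc0, lintegral_zero]
        rw [hI1, hI2, add_zero]
      · have hall : ∀ s, cdf ρ s ≤ u := by
          intro s
          obtain ⟨n, hnN, hn⟩ := not_bddAbove_iff.mp hb s
          exact (monotone_cdf ρ hn.le).trans hnN
        have hu1 : (1 : ℝ) ≤ u :=
          le_of_tendsto (tendsto_cdf_atTop ρ) (Eventually.of_forall hall)
        have : ∀ s, hfun ρ u s = 1 := fun s => hfun_of_le ρ (hall s)
        simp only [this, lintegral_one, measure_univ]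
        rw [le_antisymm h1 hu1, ENNReal.ofReal_one]
    · push_neg at hA
      have hu0 : u ≤ 0 := by
        by_contra hcon
        push_neg at hcon
        obtain ⟨s, hs⟩ := ((tendsto_cdf_atBot ρ).eventually_lt_const hcon).exists
        exact absurd hs.le (not_le.2 (hA s))
      have : ∀ s, hfun ρ u s = 0 := fun s =>
        hfun_of_gt ρ (not_le.2 (hA s)) (fun hcon => not_le.2 (hA s) (hat s hcon))
      simp only [this, lintegral_zero]
      rw [le_antisymm hu0 h0, ENNReal.ofReal_zero]

end SklarAux


lemma sklar_measurable_lower {m : ℕ} (w : Fin m → ℝ) :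
    MeasurableSet {y : Fin m → ℝ | ∀ i, y i ≤ w i} := by
  have h : {y : Fin m → ℝ | ∀ i, y i ≤ w i} = ⋂ i, (fun y : Fin m → ℝ => y i) ⁻¹' Set.Iic (w i) := by
    ext y
    simp [Set.mem_iInter]
  rw [h]
  exact MeasurableSet.iInter fun i => (measurable_pi_apply i) measurableSet_Iic

lemma sklar_prod_neg {α : Type*} (S : Finset α) (f : α → ℝ) :
    ∏ i ∈ S, -f i = (-1:ℝ)^S.card * ∏ i ∈ S, f i := by
  classical
  induction S using Finset.induction with
  | empty => simp
  | insert _ _ h ih =>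
      rw [Finset.prod_insert h, Finset.prod_insert h, ih, Finset.card_insert_of_notMem h]
      ring

lemma sklar_mincreasing_aux (m : ℕ) (ν : Measure (Fin m → ℝ)) [IsFiniteMeasure ν]
    (u v : Fin m → ℝ) (huv : ∀ i, u i ≤ v i) :
    0 ≤ ∑ S : Finset (Fin m), (-1 : ℝ) ^ S.card *
      (ν {y | ∀ i, y i ≤ (fun j => if j ∈ S then u j else v j) i}).toReal := by
  classical
  set a : (Fin m → ℝ) → Fin m → ℝ := fun y i => if y i ≤ u i then (1:ℝ) else 0 with ha
  set b : (Fin m → ℝ) → Fin m → ℝ := fun y i => if y i ≤ v i then (1:ℝ) else 0 with hb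
  have hind : ∀ w : Fin m → ℝ, ∀ y : Fin m → ℝ,
      ({y' : Fin m → ℝ | ∀ i, y' i ≤ w i}).indicator (fun _ => (1:ℝ)) y
        = ∏ i, (if y i ≤ w i then (1:ℝ) else 0) := by
    intro w y
    by_cases h : ∀ i, y i ≤ w i
    · rw [Set.indicator_of_mem (show y ∈ {y' : Fin m → ℝ | ∀ i, y' i ≤ w i} from h), eq_comm]
      exact Finset.prod_eq_one fun i _ => if_pos (h i)
    · push_neg at h
      obtain ⟨i, hi⟩ := h
      rw [Set.indicator_of_notMem (by simpa using ⟨i, hi⟩), eq_comm]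
      exact Finset.prod_eq_zero (Finset.mem_univ i) (if_neg (not_le.2 hi))
  have key : ∀ y : Fin m → ℝ,
      ∑ S : Finset (Fin m), (-1:ℝ)^S.card *
        ({y' : Fin m → ℝ | ∀ i, y' i ≤ (fun j => if j ∈ S then u j else v j) i}).indicator
          (fun _ => (1:ℝ)) y
      = ∏ i, (b y i - a y i) := by
    intro y
    have h1 : ∀ i, b y i - a y i = (fun i => -(a y i)) i + b y i := fun i => by ring
    rw [Finset.prod_congr rfl fun i _ => h1 i, Finset.prod_add, Finset.powerset_univ]
    refine Finset.sum_congr rfl fun S _ => ?_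
    rw [hind]
    have h2 : ∀ i, (if y i ≤ (if i ∈ S then u i else v i) then (1:ℝ) else 0)
        = if i ∈ S then a y i else b y i := by
      intro i
      by_cases hiS : i ∈ S <;> simp [hiS, ha, hb]
    rw [Finset.prod_congr rfl fun i _ => h2 i, Finset.prod_ite]
    have h3 : Finset.univ.filter (· ∈ S) = S := by
      ext i; simp
    have h4 : Finset.univ.filter (· ∉ S) = Finset.univ \ S := by
      ext i; simp
    have h5 : ∏ i ∈ S, -a y i = (-1:ℝ)^S.card * ∏ i ∈ S, a y i :=
      sklar_prod_neg S (a y)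
    rw [h3, h4, h5]
    ring
  have hQint : ∀ S : Finset (Fin m),
      Integrable (fun y => (-1:ℝ)^S.card *
        ({y' : Fin m → ℝ | ∀ i, y' i ≤ (fun j => if j ∈ S then u j else v j) i}).indicator
          (fun _ => (1:ℝ)) y) ν :=
    fun S => ((integrable_const (1:ℝ)).indicator (sklar_measurable_lower _)).const_mul _
  have step1 : 0 ≤ ∫ y, ∏ i, (b y i - a y i) ∂ν := by
    refine integral_nonneg fun y => Finset.prod_nonneg fun i _ => ?_
    by_cases h1 : y i ≤ u i
    · have h2 : y i ≤ v i := h1.trans (huv i)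
      simp [ha, hb, h1, h2]
    · by_cases h2 : y i ≤ v i <;> simp [ha, hb, h1, h2]
  calc (0:ℝ) ≤ ∫ y, ∏ i, (b y i - a y i) ∂ν := step1
    _ = ∫ y, ∑ S : Finset (Fin m), (-1:ℝ)^S.card *
        ({y' : Fin m → ℝ | ∀ i, y' i ≤ (fun j => if j ∈ S then u j else v j) i}).indicator
          (fun _ => (1:ℝ)) y ∂ν := by
        refine integral_congr_ae (Eventually.of_forall fun y => ?_)
        exact (key y).symm
    _ = ∑ S : Finset (Fin m), ∫ y, (-1:ℝ)^S.card *
        ({y' : Fin m → ℝ | ∀ i, y' i ≤ (fun j => if j ∈ S then u j else v j) i}).indicator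
          (fun _ => (1:ℝ)) y ∂ν := integral_finset_sum _ (fun S _ => hQint S)
    _ = ∑ S : Finset (Fin m), (-1 : ℝ) ^ S.card *
        (ν {y | ∀ i, y i ≤ (fun j => if j ∈ S then u j else v j) i}).toReal := by
        refine Finset.sum_congr rfl fun S _ => ?_
        rw [integral_const_mul, integral_indicator_const (1:ℝ) (sklar_measurable_lower _),
          smul_eq_mul, mul_one]
        rfl


/-- Sklar's theorem, existence direction. -/
theorem sklar_existence
    (m : ℕ) (hm : 2 ≤ m) (μ : Measure (Fin m → ℝ)) [IsProbabilityMeasure μ] :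
    ∃ C : (Fin m → ℝ) → ℝ,
      (∀ u : Fin m → ℝ, (∀ i, u i ∈ Set.Icc (0 : ℝ) 1) → C u ∈ Set.Icc (0 : ℝ) 1) ∧
      Grounded m C ∧ UniformMargins m C ∧ MIncreasing m C ∧
      ∀ t : Fin m → ℝ,
        (μ {x | ∀ i, x i ≤ t i}).toReal = C (fun i => (μ {x | x i ≤ t i}).toReal) := by
  classical
  have hproj : ∀ i : Fin m, Measurable fun x : Fin m → ℝ => x i := fun i => measurable_pi_apply i
  set ρ : Fin m → Measure ℝ := fun i => μ.map (fun x => x i) with hρdef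
  have hρprob : ∀ i, IsProbabilityMeasure (ρ i) := fun i =>
    Measure.isProbabilityMeasure_map (hproj i).aemeasurable
  set lam : Measure ℝ := volume.restrict (Set.Icc 0 1) with hlamdef
  haveI hlamprob : IsProbabilityMeasure lam :=
    ⟨by rw [hlamdef, Measure.restrict_apply_univ, Real.volume_Icc]; norm_num⟩
  set P : Measure ((Fin m → ℝ) × ℝ) := μ.prod lam with hPdef
  haveI hPprob : IsProbabilityMeasure P := by rw [hPdef]; infer_instance
  set G : ((Fin m → ℝ) × ℝ) → Fin m → ℝ := fun p i =>
    SklarAux.Fl (ρ i) (p.1 i) + p.2 * (cdf (ρ i) (p.1 i) - SklarAux.Fl (ρ i) (p.1 i)) with hGdef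
  have hGi : ∀ i, Measurable fun p : (Fin m → ℝ) × ℝ => G p i := by
    intro i
    have hF : Measurable (cdf (ρ i)) := (monotone_cdf (ρ i)).measurable
    have hFl : Measurable (SklarAux.Fl (ρ i)) := (SklarAux.Fl_mono (ρ i)).measurable
    have hx : Measurable fun p : (Fin m → ℝ) × ℝ => p.1 i := (hproj i).comp measurable_fst
    exact (hFl.comp hx).add (measurable_snd.mul ((hF.comp hx).sub (hFl.comp hx)))
  have hGm : Measurable G := measurable_pi_lambda _ hGi
  set ν : Measure (Fin m → ℝ) := P.map G with hνdef
  haveI hνprob : IsProbabilityMeasure ν := by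
    rw [hνdef]; exact Measure.isProbabilityMeasure_map hGm.aemeasurable
  -- marginal uniformity of ν
  have hmarg : ∀ (i : Fin m) (u : ℝ), 0 ≤ u → u ≤ 1 →
      ν {y | y i ≤ u} = ENNReal.ofReal u := by
    intro i u h0 h1
    haveI := hρprob i
    have hset : MeasurableSet {y : Fin m → ℝ | y i ≤ u} := (hproj i) measurableSet_Iic
    have hpre : MeasurableSet ((fun p : (Fin m → ℝ) × ℝ => G p i) ⁻¹' Set.Iic u) :=
      (hGi i) measurableSet_Iic
    rw [hνdef, Measure.map_apply hGm hset]
    have heq : G ⁻¹' {y | y i ≤ u} = (fun p : (Fin m → ℝ) × ℝ => G p i) ⁻¹' Set.Iic u := rfl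
    rw [heq, hPdef, Measure.prod_apply hpre]
    have hin : ∀ x : Fin m → ℝ,
        lam (Prod.mk x ⁻¹' ((fun p : (Fin m → ℝ) × ℝ => G p i) ⁻¹' Set.Iic u))
          = SklarAux.hfun (ρ i) u (x i) := by
      intro x
      have hps : Prod.mk x ⁻¹' ((fun p : (Fin m → ℝ) × ℝ => G p i) ⁻¹' Set.Iic u)
          = {v : ℝ | SklarAux.Fl (ρ i) (x i)
              + v * (cdf (ρ i) (x i) - SklarAux.Fl (ρ i) (x i)) ≤ u} := rfl
      rw [hps, hlamdef]
      exact SklarAux.inner_eq (ρ i) u (x i)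
    rw [lintegral_congr hin]
    exact (lintegral_map (SklarAux.hfun_measurable (ρ i) u) (hproj i)).symm.trans
      (SklarAux.unif (ρ i) h0 h1)
  set C : (Fin m → ℝ) → ℝ := fun w => (ν {y | ∀ i, y i ≤ w i}).toReal with hCdef
  refine ⟨C, ?_, ?_, ?_, ?_, ?_⟩
  · -- range
    intro w _
    refine ⟨ENNReal.toReal_nonneg, ?_⟩
    simp only [hCdef]
    calc (ν {y | ∀ i, y i ≤ w i}).toReal
        ≤ (ν Set.univ).toReal :=
          ENNReal.toReal_mono (measure_ne_top ν _) (measure_mono (Set.subset_univ _))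
      _ = 1 := by rw [measure_univ, ENNReal.toReal_one]
  · -- grounded
    rintro w hw ⟨i, hi⟩
    have hsub : {y : Fin m → ℝ | ∀ j, y j ≤ w j} ⊆ {y | y i ≤ (0:ℝ)} :=
      fun y hy => le_of_le_of_eq (hy i) hi
    have hnull : ν {y : Fin m → ℝ | ∀ j, y j ≤ w j} = 0 :=
      measure_mono_null hsub (by rw [hmarg i 0 le_rfl zero_le_one, ENNReal.ofReal_zero])
    simp only [hCdef]
    rw [show {y : Fin m → ℝ | ∀ i, y i ≤ w i} = {y : Fin m → ℝ | ∀ j, y j ≤ w j} from rfl,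
      hnull, ENNReal.toReal_zero]
  · -- uniform margins
    intro i s hs
    obtain ⟨hs0, hs1⟩ := hs
    set Q : Set (Fin m → ℝ) :=
      {y | ∀ j, y j ≤ Function.update (fun _ => (1:ℝ)) i s j} with hQdef
    have hsub1 : Q ⊆ {y | y i ≤ s} := by
      intro y hy
      have := hy i
      rwa [Function.update_self] at this
    have hnull : ν ({y : Fin m → ℝ | y i ≤ s} \ Q) = 0 := by
      refine measure_mono_null (?_ : _ ⊆ ⋃ j, {y : Fin m → ℝ | 1 < y j}) ?_
      · rintro y ⟨hyi, hyn⟩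
        simp only [hQdef, Set.mem_setOf_eq, not_forall] at hyn
        obtain ⟨j, hj⟩ := hyn
        have hji : j ≠ i := by
          rintro rfl
          rw [Function.update_self] at hj
          exact hj hyi
        refine Set.mem_iUnion.2 ⟨j, ?_⟩
        rw [Function.update_of_ne hji] at hj
        exact not_le.1 hj
      · refine measure_iUnion_null fun j => ?_
        have h1 : ν {y : Fin m → ℝ | y j ≤ 1} = 1 := by
          rw [hmarg j 1 zero_le_one le_rfl, ENNReal.ofReal_one]
        have hcompl : {y : Fin m → ℝ | 1 < y j} = {y : Fin m → ℝ | y j ≤ 1}ᶜ := by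
          ext y
          simp [not_le]
        rw [hcompl, measure_compl (show MeasurableSet {y : Fin m → ℝ | y j ≤ (1:ℝ)} from (hproj j) measurableSet_Iic) (measure_ne_top ν _), h1,
          measure_univ, tsub_self]
    have hle1 : ν Q ≤ ENNReal.ofReal s := by
      rw [← hmarg i s hs0 hs1]
      exact measure_mono hsub1
    have hge1 : ENNReal.ofReal s ≤ ν Q := by
      rw [← hmarg i s hs0 hs1]
      calc ν {y : Fin m → ℝ | y i ≤ s}
          ≤ ν (Q ∪ ({y : Fin m → ℝ | y i ≤ s} \ Q)) := by
            refine measure_mono fun y hy => ?_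
            by_cases hyQ : y ∈ Q
            · exact Set.mem_union_left _ hyQ
            · exact Set.mem_union_right _ ⟨hy, hyQ⟩
        _ ≤ ν Q + ν ({y : Fin m → ℝ | y i ≤ s} \ Q) := measure_union_le _ _
        _ = ν Q := by rw [hnull, add_zero]
    have hQeq : ν Q = ENNReal.ofReal s := le_antisymm hle1 hge1
    simp only [hCdef]
    rw [show {y : Fin m → ℝ | ∀ i_1, y i_1 ≤ Function.update (fun _ => (1:ℝ)) i s i_1} = Q
      from rfl, hQeq, ENNReal.toReal_ofReal hs0]
  · -- m-increasing
    intro u v _ _ huv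
    exact sklar_mincreasing_aux m ν u v huv
  · -- the Sklar identity
    intro t
    haveI : ∀ i, IsProbabilityMeasure (ρ i) := hρprob
    have hFt2 : ∀ i, (μ {x | x i ≤ t i}).toReal = cdf (ρ i) (t i) := by
      intro i
      have hps : {x : Fin m → ℝ | x i ≤ t i} = (fun x : Fin m → ℝ => x i) ⁻¹' Set.Iic (t i) := rfl
      rw [hps, ← Measure.map_apply (hproj i) measurableSet_Iic]
      exact (cdf_eq_real (ρ i) (t i)).symm
    have hNmeas : ∀ i, MeasurableSet {s : ℝ | t i < s ∧ cdf (ρ i) s ≤ cdf (ρ i) (t i)} :=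
      fun i => measurableSet_Ioi.inter
        (measurableSet_le (monotone_cdf (ρ i)).measurable measurable_const)
    have hjoint : ν {y | ∀ i, y i ≤ cdf (ρ i) (t i)} = μ {x | ∀ i, x i ≤ t i} := by
      rw [hνdef, Measure.map_apply hGm
        (show MeasurableSet {y : Fin m → ℝ | ∀ i, y i ≤ cdf (ρ i) (t i)} from
          sklar_measurable_lower _)]
      have hRHS : μ {x : Fin m → ℝ | ∀ i, x i ≤ t i}
          = P ({x : Fin m → ℝ | ∀ i, x i ≤ t i} ×ˢ (Set.univ : Set ℝ)) := by
        rw [hPdef, Measure.prod_prod, measure_univ, mul_one]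
      rw [hRHS]
      refine measure_congr ?_
      set Z : Set ((Fin m → ℝ) × ℝ) :=
        ((Set.univ : Set (Fin m → ℝ)) ×ˢ (Set.Ioc (0:ℝ) 1)ᶜ) ∪
          ⋃ i, ({x : Fin m → ℝ | x i ∈ {s : ℝ | t i < s ∧ cdf (ρ i) s ≤ cdf (ρ i) (t i)}}
            ×ˢ (Set.univ : Set ℝ)) with hZdef
      have hZ0 : P Z = 0 := by
        rw [hZdef]
        refine measure_union_null ?_ (measure_iUnion_null fun i => ?_)
        · rw [hPdef, Measure.prod_prod, measure_univ, one_mul, hlamdef,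
            Measure.restrict_apply' measurableSet_Icc]
          have hset0 : (Set.Ioc (0:ℝ) 1)ᶜ ∩ Set.Icc 0 1 = {0} := by
            ext x
            simp only [Set.mem_inter_iff, Set.mem_compl_iff, Set.mem_Ioc, Set.mem_Icc,
              Set.mem_singleton_iff, not_and, not_le]
            constructor
            · rintro ⟨h1, h2, h3⟩
              rcases lt_or_eq_of_le h2 with h | h
              · linarith [h1 h]
              · exact h.symm
            · rintro rfl
              exact ⟨fun h => absurd h (lt_irrefl 0), le_rfl, zero_le_one⟩
          rw [hset0]
          exact Real.volume_singleton
        · rw [hPdef, Measure.prod_prod, measure_univ, mul_one]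
          have hmap : μ {x : Fin m → ℝ | x i ∈ {s : ℝ | t i < s ∧ cdf (ρ i) s ≤ cdf (ρ i) (t i)}}
              = ρ i {s : ℝ | t i < s ∧ cdf (ρ i) s ≤ cdf (ρ i) (t i)} := by
            rw [hρdef, Measure.map_apply (hproj i) (hNmeas i)]
            rfl
          rw [hmap]
          exact SklarAux.flat_null (ρ i) (t i)
      have hae : ∀ᵐ p ∂P, p ∉ Z := (measure_eq_zero_iff_ae_notMem).1 hZ0
      rw [Filter.eventuallyEq_set]
      filter_upwards [hae] with p hp
      simp only [hZdef, Set.mem_union, Set.mem_iUnion, Set.mem_prod, Set.mem_univ, true_and,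
        and_true, Set.mem_compl_iff, not_or, not_exists, not_not, Set.mem_setOf_eq] at hp
      obtain ⟨⟨hv0, hv1⟩, hN⟩ := hp
      simp only [Set.mem_preimage, Set.mem_prod, Set.mem_univ, and_true, Set.mem_setOf_eq]
      constructor
      · intro h i
        by_contra hcon
        push_neg at hcon
        have hNi := hN i
        have hFgt : cdf (ρ i) (t i) < cdf (ρ i) (p.1 i) := by
          by_contra hf
          push_neg at hf
          exact hNi ⟨hcon, hf⟩
        have hFmge : cdf (ρ i) (t i) ≤ SklarAux.Fl (ρ i) (p.1 i) := SklarAux.le_Fl (ρ i) hcon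
        have hΔ : 0 ≤ cdf (ρ i) (p.1 i) - SklarAux.Fl (ρ i) (p.1 i) :=
          sub_nonneg.2 (SklarAux.Fl_le (ρ i) (p.1 i))
        have hGle := h i
        simp only [hGdef] at hGle
        have hΔ0 : cdf (ρ i) (p.1 i) - SklarAux.Fl (ρ i) (p.1 i) ≤ 0 := by
          by_contra hpos
          push_neg at hpos
          have := mul_pos hv0 hpos
          linarith
        have hzero : cdf (ρ i) (p.1 i) - SklarAux.Fl (ρ i) (p.1 i) = 0 :=
          le_antisymm hΔ0 hΔ
        rw [hzero, mul_zero, add_zero] at hGle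
        linarith
      · intro h i
        have hΔ : 0 ≤ cdf (ρ i) (p.1 i) - SklarAux.Fl (ρ i) (p.1 i) :=
          sub_nonneg.2 (SklarAux.Fl_le (ρ i) (p.1 i))
        have hgle : p.2 * (cdf (ρ i) (p.1 i) - SklarAux.Fl (ρ i) (p.1 i))
            ≤ cdf (ρ i) (p.1 i) - SklarAux.Fl (ρ i) (p.1 i) :=
          mul_le_of_le_one_left hΔ hv1
        have hmono : cdf (ρ i) (p.1 i) ≤ cdf (ρ i) (t i) := monotone_cdf (ρ i) (h i)
        simp only [hGdef]
        linarith
    have hsets : {y : Fin m → ℝ | ∀ i, y i ≤ (μ {x | x i ≤ t i}).toReal}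
        = {y : Fin m → ℝ | ∀ i, y i ≤ cdf (ρ i) (t i)} := by
      simp only [hFt2]
    simp only [hCdef]
    rw [hsets, hjoint]
end

section
/- (Sklar's theorem, converse direction) Let m ≥ 2, let ν be a probability measure on [0,1]^m each of whose one-dimensional marginals is the uniform distribution on [0,1], and let C(u) = ν{w : w_i ≤ u_i for all i} be its distribution function. Let F_1,…,F_m be distribution functions of probability measures on ℝ. Then there exists a probability measure μ on ℝ^m whose joint distribution function equals t ↦ C(F_1(t_1),…,F_m(t_m)) and whose i-th marginal distribution function is F_i for each i. -/
open MeasureTheory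

section SklarAux

open ProbabilityTheory Filter Set Topology

/-- Generalized inverse (quantile function) of the cdf of `p`. -/
noncomputable def skQ (p : Measure ℝ) (u : ℝ) : ℝ := sInf {x | u ≤ cdf p x}

lemma skQ_of_nonpos (p : Measure ℝ) {u : ℝ} (hu : u ≤ 0) : skQ p u = 0 := by
  unfold skQ
  have h : {x | u ≤ cdf p x} = univ :=
    eq_univ_of_forall fun x => hu.trans (cdf_nonneg p x)
  rw [h, Real.sInf_of_not_bddBelow not_bddBelow_univ]

lemma skQ_of_one_lt (p : Measure ℝ) {u : ℝ} (hu : 1 < u) : skQ p u = 0 := by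
  unfold skQ
  have h : {x | u ≤ cdf p x} = ∅ :=
    eq_empty_of_forall_notMem fun x hx => absurd (hx.trans (cdf_le_one p x)) (not_le.2 hu)
  rw [h, Real.sInf_empty]

lemma skQ_set_nonempty (p : Measure ℝ) {u : ℝ} (hu : u < 1) :
    {x | u ≤ cdf p x}.Nonempty :=
  (Filter.Tendsto.eventually_const_le hu (tendsto_cdf_atTop p)).exists

lemma skQ_bddBelow (p : Measure ℝ) {u : ℝ} (hu : 0 < u) :
    BddBelow {x | u ≤ cdf p x} := by
  obtain ⟨x₀, hx₀⟩ := (Filter.Tendsto.eventually_lt_const hu (tendsto_cdf_atBot p)).exists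
  refine ⟨x₀, fun y hy => le_of_not_gt fun h => ?_⟩
  exact absurd (hy.trans ((monotone_cdf p) h.le)) (not_le.2 hx₀)

lemma skQ_mem (p : Measure ℝ) {u : ℝ} (h0 : 0 < u) (h1 : u < 1) :
    u ≤ cdf p (skQ p u) := by
  have hne := skQ_set_nonempty p h1
  have hforall : ∀ x ∈ Ioi (skQ p u), u ≤ cdf p x := by
    intro x hx
    obtain ⟨s, hs, hsx⟩ := exists_lt_of_csInf_lt hne hx
    exact hs.trans ((monotone_cdf p) hsx.le)
  have hc : Tendsto (cdf p) (𝓝[>] (skQ p u)) (𝓝 (cdf p (skQ p u))) :=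
    ((cdf p).right_continuous (skQ p u)).tendsto.mono_left
      (nhdsWithin_mono _ Ioi_subset_Ici_self)
  exact ge_of_tendsto hc (eventually_nhdsWithin_of_forall hforall)

lemma skQ_le_iff (p : Measure ℝ) {u t : ℝ} (h0 : 0 < u) (h1 : u < 1) :
    skQ p u ≤ t ↔ u ≤ cdf p t := by
  constructor
  · intro h
    exact (skQ_mem p h0 h1).trans ((monotone_cdf p) h)
  · intro h
    exact csInf_le (skQ_bddBelow p h0) h

lemma skQ_measurable (p : Measure ℝ) : Measurable (skQ p) := by
  apply measurable_of_Iic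
  intro t
  have h : skQ p ⁻¹' Iic t =
      (Ioo (0 : ℝ) 1 ∩ Iic (cdf p t)) ∪ ((Iic (0 : ℝ) ∪ Ioi 1) ∩ {u : ℝ | (0 : ℝ) ≤ t}) ∪
        ({(1 : ℝ)} ∩ {u : ℝ | skQ p 1 ≤ t}) := by
    ext u
    simp only [mem_preimage, mem_Iic, mem_union, mem_inter_iff, mem_Ioo, mem_Ioi,
      mem_setOf_eq, mem_singleton_iff]
    constructor
    · intro h
      rcases le_or_gt u 0 with hu | hu
      · exact Or.inl (Or.inr ⟨Or.inl hu, by rwa [skQ_of_nonpos p hu] at h⟩)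
      rcases lt_trichotomy u 1 with hu1 | hu1 | hu1
      · exact Or.inl (Or.inl ⟨⟨hu, hu1⟩, (skQ_le_iff p hu hu1).1 h⟩)
      · exact Or.inr ⟨hu1, hu1 ▸ h⟩
      · exact Or.inl (Or.inr ⟨Or.inr hu1, by rwa [skQ_of_one_lt p hu1] at h⟩)
    · rintro ((⟨⟨h0, h1⟩, hle⟩ | ⟨hu | hu, ht⟩) | ⟨rfl, h⟩)
      · exact (skQ_le_iff p h0 h1).2 hle
      · rw [skQ_of_nonpos p hu]; exact ht
      · rw [skQ_of_one_lt p hu]; exact ht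
      · exact h
  rw [h]
  exact ((measurableSet_Ioo.inter measurableSet_Iic).union
      ((measurableSet_Iic.union measurableSet_Ioi).inter (MeasurableSet.const _))).union
    ((measurableSet_singleton _).inter (MeasurableSet.const _))

end SklarAux

/-- Sklar's theorem, converse direction: given a copula, realized as the distribution
function of a probability measure `ν` on `[0,1]^m` with uniform marginals, and given
one-dimensional distribution functions `F₁, …, F_m` of probability measures on `ℝ`,
there is a probability measure on `ℝ^m` whose joint distribution function is
`t ↦ C(F₁(t₁), …, F_m(t_m))` and whose marginals have distribution functions `F₁, …, F_m`. -/
theorem sklar_converse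
    (m : ℕ) (hm : 2 ≤ m) (ν : Measure (Fin m → ℝ)) [IsProbabilityMeasure ν]
    (hmarg : ∀ i : Fin m,
      ν.map (fun w => w i) = volume.restrict (Set.Icc (0 : ℝ) 1))
    (ρ : Fin m → Measure ℝ) (hρ : ∀ i, IsProbabilityMeasure (ρ i)) :
    ∃ μ : Measure (Fin m → ℝ), IsProbabilityMeasure μ ∧
      (∀ t : Fin m → ℝ,
        (μ {x | ∀ i, x i ≤ t i}).toReal =
          (ν {w | ∀ i, w i ≤ (ρ i (Set.Iic (t i))).toReal}).toReal) ∧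
      (∀ i : Fin m, ∀ s : ℝ,
        (μ {x | x i ≤ s}).toReal = (ρ i (Set.Iic s)).toReal) := by
  classical
  haveI : ∀ i, IsProbabilityMeasure (ρ i) := hρ
  open ProbabilityTheory in
  set T : (Fin m → ℝ) → (Fin m → ℝ) := fun w i => skQ (ρ i) (w i) with hTdef
  have hTmeas : Measurable T :=
    measurable_pi_lambda _ fun i => (skQ_measurable (ρ i)).comp (measurable_pi_apply i)
  -- almost every point of ν has all coordinates in (0,1)
  have hnull : ∀ i : Fin m, ν {w | w i ∉ Set.Ioo (0 : ℝ) 1} = 0 := by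
    intro i
    have h1 : ν {w | w i ∉ Set.Ioo (0 : ℝ) 1}
        = (ν.map (fun w => w i)) (Set.Ioo (0 : ℝ) 1)ᶜ := by
      rw [Measure.map_apply (measurable_pi_apply i) measurableSet_Ioo.compl]
      rfl
    rw [h1, hmarg i, Measure.restrict_apply measurableSet_Ioo.compl]
    have h2 : (Set.Ioo (0 : ℝ) 1)ᶜ ∩ Set.Icc 0 1 = ({0, 1} : Set ℝ) := by
      rw [Set.inter_comm, ← Set.diff_eq, Set.Icc_diff_Ioo_same zero_le_one]
    rw [h2]
    exact ((Set.countable_singleton (1:ℝ)).insert 0).measure_zero _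
  have hae : ∀ᵐ w ∂ν, ∀ i, w i ∈ Set.Ioo (0 : ℝ) 1 := by
    rw [ae_all_iff]
    intro i
    rw [ae_iff]
    exact hnull i
  refine ⟨ν.map T, Measure.isProbabilityMeasure_map hTmeas.aemeasurable, ?_, ?_⟩
  · -- joint distribution function
    intro t
    have hms : MeasurableSet {x : Fin m → ℝ | ∀ i, x i ≤ t i} := by
      rw [Set.setOf_forall]
      exact MeasurableSet.iInter fun i => measurable_pi_apply i measurableSet_Iic
    rw [Measure.map_apply hTmeas hms]
    congr 1
    refine measure_congr (Filter.eventuallyEq_set.2 ?_)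
    filter_upwards [hae] with w hw
    simp only [Set.mem_preimage, Set.mem_setOf_eq]
    refine forall_congr' fun i => ?_
    rw [skQ_le_iff (ρ i) (hw i).1 (hw i).2, ProbabilityTheory.cdf_eq_real, measureReal_def]
  · -- marginals
    intro i s
    have hms : MeasurableSet {x : Fin m → ℝ | x i ≤ s} :=
      measurable_pi_apply i measurableSet_Iic
    rw [Measure.map_apply hTmeas hms]
    have heq : ν (T ⁻¹' {x | x i ≤ s})
        = ν {w | w i ≤ ProbabilityTheory.cdf (ρ i) s} := by
      refine measure_congr (Filter.eventuallyEq_set.2 ?_)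
      filter_upwards [hae] with w hw
      simp only [Set.mem_preimage, Set.mem_setOf_eq]
      exact skQ_le_iff (ρ i) (hw i).1 (hw i).2
    set c := ProbabilityTheory.cdf (ρ i) s with hc
    have hc0 : 0 ≤ c := ProbabilityTheory.cdf_nonneg _ _
    have hc1 : c ≤ 1 := ProbabilityTheory.cdf_le_one _ _
    have h3 : ν {w | w i ≤ c} = (ν.map (fun w => w i)) (Set.Iic c) := by
      rw [Measure.map_apply (measurable_pi_apply i) measurableSet_Iic]
      rfl
    have h4 : Set.Iic c ∩ Set.Icc (0 : ℝ) 1 = Set.Icc 0 c := by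
      ext x
      simp only [Set.mem_inter_iff, Set.mem_Iic, Set.mem_Icc]
      exact ⟨fun ⟨hx, h0, _⟩ => ⟨h0, hx⟩, fun ⟨h0, hx⟩ => ⟨hx, h0, hx.trans hc1⟩⟩
    rw [heq, h3, hmarg i, Measure.restrict_apply measurableSet_Iic, h4,
      Real.volume_Icc]
    rw [sub_zero, ENNReal.toReal_ofReal hc0, hc, ProbabilityTheory.cdf_eq_real, measureReal_def]
end

section
/- Let h ∈ (0,1) and let (α_k)_{k≥1} be a sequence of positive reals with Σ_{k≥1} 1/α_k < ∞. Let (X_k)_{k≥1} be random variables on a probability space such that X_k has the Beta(α_k h, α_k(1−h)) distribution for every k. Then X_k → h almost surely as k → ∞. -/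
open MeasureTheory Filter

/-- The Beta(p, q) distribution on `ℝ`: the measure on `(0,1)` with density
`x ^ (p-1) * (1-x) ^ (q-1) / B(p,q)` where `B(p,q) = Γ(p)Γ(q)/Γ(p+q)`. -/
noncomputable def betaMeasure (p q : ℝ) : Measure ℝ :=
  (volume.restrict (Set.Ioo (0 : ℝ) 1)).withDensity fun x =>
    ENNReal.ofReal
      (Real.Gamma (p + q) / (Real.Gamma p * Real.Gamma q) *
        x ^ (p - 1) * (1 - x) ^ (q - 1))

open Set


lemma bInt_integrable {p q : ℝ} (hp : 0 < p) (hq : 0 < q) :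
    IntegrableOn (fun x : ℝ => x ^ (p - 1) * (1 - x) ^ (q - 1)) (Ioo 0 1) volume := by
  have hC := Complex.betaIntegral_convergent (u := (p:ℂ)) (v := (q:ℂ)) (by simpa) (by simpa)
  have h1 : IntegrableOn (fun x : ℝ => (x:ℂ) ^ ((p:ℂ) - 1) * (1 - (x:ℂ)) ^ ((q:ℂ) - 1))
      (Ioc (0:ℝ) 1) volume := by
    simpa [IntervalIntegrable, uIoc_of_le (zero_le_one : (0:ℝ) ≤ 1)] using hC
  have h2 := (h1.mono_set Ioo_subset_Ioc_self).re
  refine h2.congr ?_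
  rw [EventuallyEq, ae_restrict_iff' measurableSet_Ioo]
  filter_upwards with x hx
  obtain ⟨hx0, hx1⟩ := hx
  rw [show ((x:ℂ) ^ ((p:ℂ) - 1) * (1 - (x:ℂ)) ^ ((q:ℂ) - 1)) =
      ((x ^ (p-1) * (1-x) ^ (q-1) : ℝ) : ℂ) by
    push_cast
    rw [Complex.ofReal_cpow hx0.le, Complex.ofReal_cpow (by linarith)]
    push_cast; ring]
  simp

lemma bInt_eq {p q : ℝ} (hp : 0 < p) (hq : 0 < q) :
    ∫ x in Ioo (0:ℝ) 1, x ^ (p - 1) * (1 - x) ^ (q - 1) =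
      Real.Gamma p * Real.Gamma q / Real.Gamma (p + q) := by
  have key := Complex.Gamma_mul_Gamma_eq_betaIntegral (s := (p:ℂ)) (t := (q:ℂ))
    (by simpa) (by simpa)
  have hB : Complex.betaIntegral p q =
      ((∫ x in Ioo (0:ℝ) 1, x ^ (p - 1) * (1 - x) ^ (q - 1) : ℝ) : ℂ) := by
    rw [Complex.betaIntegral]
    rw [show (∫ x in Ioo (0:ℝ) 1, x ^ (p - 1) * (1 - x) ^ (q - 1)) =
        ∫ x in (0:ℝ)..1, x ^ (p - 1) * (1 - x) ^ (q - 1) by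
      rw [intervalIntegral.integral_of_le zero_le_one, ← integral_Ioc_eq_integral_Ioo]]
    rw [← intervalIntegral.integral_ofReal]
    apply intervalIntegral.integral_congr_ae
    rw [MeasureTheory.ae_iff]
    apply measure_mono_null _ (measure_singleton (1:ℝ))
    intro x hx
    simp only [Set.mem_setOf_eq, _root_.not_imp] at hx
    simp only [Set.mem_singleton_iff]
    by_contra hx1
    apply hx.2
    have hxu : x ∈ uIoc (0:ℝ) 1 := hx.1
    rw [uIoc_of_le zero_le_one] at hxu
    push_cast
    rw [Complex.ofReal_cpow hxu.1.le, Complex.ofReal_cpow (by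
      rcases lt_or_eq_of_le hxu.2 with h | h
      · linarith
      · exact absurd h hx1)]
    push_cast; ring
  rw [hB] at key
  have hΓ : (0:ℝ) < Real.Gamma (p + q) := Real.Gamma_pos_of_pos (by linarith)
  have := key
  rw [Complex.Gamma_ofReal, Complex.Gamma_ofReal, show ((p:ℂ) + q) = ((p+q : ℝ):ℂ) by push_cast; ring,
    Complex.Gamma_ofReal] at this
  rw [← Complex.ofReal_mul, ← Complex.ofReal_mul, Complex.ofReal_inj] at this
  field_simp
  linarith [this]

lemma lint_sq {p q : ℝ} (hp : 0 < p) (hq : 0 < q) (h : ℝ) :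
    ∫⁻ x, ENNReal.ofReal ((x - h)^2) ∂(betaMeasure p q)
      = ENNReal.ofReal (p*(p+1)/((p+q)*(p+q+1)) - 2*h*(p/(p+q)) + h^2) := by
  set c : ℝ := Real.Gamma (p + q) / (Real.Gamma p * Real.Gamma q) with hc
  have hΓp := Real.Gamma_pos_of_pos hp
  have hΓq := Real.Gamma_pos_of_pos hq
  have hΓpq := Real.Gamma_pos_of_pos (show (0:ℝ) < p + q by linarith)
  have hcpos : 0 < c := by positivity
  have hgm : Measurable fun x : ℝ =>
      ENNReal.ofReal (c * x ^ (p - 1) * (1 - x) ^ (q - 1)) := by fun_prop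
  rw [betaMeasure, ← hc,
    lintegral_withDensity_eq_lintegral_mul _ hgm (by fun_prop)]
  set G : ℝ → ℝ := fun x => c * (x ^ ((p+2) - 1) * (1 - x) ^ (q - 1)
      - 2*h*(x ^ ((p+1) - 1) * (1 - x) ^ (q - 1))
      + h^2*(x ^ (p - 1) * (1 - x) ^ (q - 1))) with hG
  have hFG : ∀ x ∈ Ioo (0:ℝ) 1,
      G x = (c * x ^ (p - 1) * (1 - x) ^ (q - 1)) * (x - h)^2 := by
    intro x hx
    obtain ⟨hx0, hx1⟩ := hx
    have h2 : x ^ ((p+2) - 1) = x ^ (p-1) * x^2 := by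
      rw [← Real.rpow_natCast x 2, ← Real.rpow_add hx0]
      congr 1; push_cast; ring
    have h1 : x ^ ((p+1) - 1) = x ^ (p-1) * x := by
      rw [show (p+1)-1 = (p-1)+1 by ring, Real.rpow_add hx0, Real.rpow_one]
    rw [hG]; simp only
    rw [h1, h2]; ring
  have hcong : ∀ x ∈ Ioo (0:ℝ) 1,
      ((fun x : ℝ => ENNReal.ofReal (c * x ^ (p - 1) * (1 - x) ^ (q - 1))) *
        fun x : ℝ => ENNReal.ofReal ((x - h)^2)) x = ENNReal.ofReal (G x) := by
    intro x hx
    obtain ⟨hx0, hx1⟩ := hx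
    simp only [Pi.mul_apply]
    rw [← ENNReal.ofReal_mul (by
      have := Real.rpow_nonneg hx0.le (p-1)
      have := Real.rpow_nonneg (by linarith : (0:ℝ) ≤ 1 - x) (q-1)
      positivity)]
    rw [hFG x ⟨hx0, hx1⟩]
  rw [setLIntegral_congr_fun measurableSet_Ioo hcong]
  have hint : IntegrableOn G (Ioo (0: ℝ) 1) volume := by
    apply Integrable.const_mul
    exact ((bInt_integrable (by linarith : (0:ℝ) < p+2) hq).sub
      ((bInt_integrable (by linarith : (0:ℝ) < p+1) hq).const_mul _)).add
      ((bInt_integrable hp hq).const_mul _)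
  have hnn : 0 ≤ᵐ[volume.restrict (Ioo (0:ℝ) 1)] G := by
    rw [EventuallyLE, ae_restrict_iff' measurableSet_Ioo]
    filter_upwards with x hx
    simp only [Pi.zero_apply]
    obtain ⟨hx0, hx1⟩ := hx
    rw [hFG x ⟨hx0, hx1⟩]
    have := Real.rpow_nonneg hx0.le (p-1)
    have := Real.rpow_nonneg (by linarith : (0:ℝ) ≤ 1 - x) (q-1)
    positivity
  rw [← ofReal_integral_eq_lintegral_ofReal hint hnn]
  congr 1
  have hval : ∫ x in Ioo (0:ℝ) 1, G x =
      c * ((Real.Gamma (p+2) * Real.Gamma q / Real.Gamma (p+2+q))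
        - 2*h*(Real.Gamma (p+1) * Real.Gamma q / Real.Gamma (p+1+q))
        + h^2*(Real.Gamma p * Real.Gamma q / Real.Gamma (p+q))) := by
    have hA : IntegrableOn (fun x : ℝ => x ^ ((p+2) - 1) * (1 - x) ^ (q - 1))
        (Ioo 0 1) volume := bInt_integrable (by linarith) hq
    have hB : IntegrableOn (fun x : ℝ => 2*h*(x ^ ((p+1) - 1) * (1 - x) ^ (q - 1)))
        (Ioo 0 1) volume := (bInt_integrable (by linarith : (0:ℝ) < p+1) hq).const_mul _
    have hC2 : IntegrableOn (fun x : ℝ => h^2*(x ^ (p - 1) * (1 - x) ^ (q - 1)))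
        (Ioo 0 1) volume := (bInt_integrable hp hq).const_mul _
    have hAB : IntegrableOn (fun x : ℝ => x ^ ((p+2) - 1) * (1 - x) ^ (q - 1)
        - 2*h*(x ^ ((p+1) - 1) * (1 - x) ^ (q - 1))) (Ioo 0 1) volume := hA.sub hB
    rw [hG]
    rw [integral_const_mul, integral_add hAB hC2, integral_sub hA hB,
      integral_const_mul, integral_const_mul,
      bInt_eq (by linarith) hq, bInt_eq (by linarith) hq, bInt_eq hp hq]
  rw [hval]
  have e1 : Real.Gamma (p+1) = p * Real.Gamma p := Real.Gamma_add_one hp.ne'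
  have e2 : Real.Gamma (p+2) = (p+1) * (p * Real.Gamma p) := by
    rw [show p+2 = (p+1)+1 by ring, Real.Gamma_add_one (by positivity), e1]
  have e3 : Real.Gamma (p+1+q) = (p+q) * Real.Gamma (p+q) := by
    rw [show p+1+q = (p+q)+1 by ring, Real.Gamma_add_one (by positivity)]
  have e4 : Real.Gamma (p+2+q) = (p+q+1) * ((p+q) * Real.Gamma (p+q)) := by
    rw [show p+2+q = ((p+q)+1)+1 by ring, Real.Gamma_add_one (by positivity),
      Real.Gamma_add_one (by positivity)]
  rw [hc, e1, e2, e3, e4]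
  have h5 : (0:ℝ) < p + q := by linarith
  have h6 : (0:ℝ) < p + q + 1 := by linarith
  field_simp

/-- If `X_k ~ Beta(α_k h, α_k (1−h))` with `Σ 1/α_k < ∞`, then `X_k → h` almost surely. -/
theorem beta_tendsto_ae
    {Ω : Type*} [MeasurableSpace Ω] (μ : Measure Ω) [IsProbabilityMeasure μ]
    (h : ℝ) (hh : h ∈ Set.Ioo (0 : ℝ) 1)
    (α : ℕ → ℝ) (hα : ∀ k, 0 < α k) (hsum : Summable fun k => 1 / α k)
    (X : ℕ → Ω → ℝ) (hX : ∀ k, Measurable (X k))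
    (hlaw : ∀ k, μ.map (X k) = betaMeasure (α k * h) (α k * (1 - h))) :
    ∀ᵐ ω ∂μ, Tendsto (fun k => X k ω) atTop (nhds h) := by
  obtain ⟨hh0, hh1⟩ := hh
  have hh1' : 0 < 1 - h := by linarith
  -- second moment identity
  have key : ∀ k, ∫⁻ ω, ENNReal.ofReal ((X k ω - h)^2) ∂μ
      = ENNReal.ofReal (h*(1-h)/(α k + 1)) := by
    intro k
    have hm : Measurable fun x : ℝ => ENNReal.ofReal ((x - h)^2) := by fun_prop
    rw [← lintegral_map hm (hX k), hlaw k,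
      lint_sq (mul_pos (hα k) hh0) (mul_pos (hα k) hh1')]
    congr 1
    have e : α k * h + α k * (1-h) = α k := by ring
    rw [e]
    have h1 := hα k
    have h2 : (0:ℝ) < α k + 1 := by linarith
    field_simp
    ring
  -- Chebyshev bound for events
  set s : ℕ → ℕ → Set Ω := fun n k =>
    {ω | ENNReal.ofReal ((1/(n+1:ℝ))^2) ≤ ENNReal.ofReal ((X k ω - h)^2)} with hs
  have cheb : ∀ n k, μ (s n k) ≤
      ENNReal.ofReal ((h*(1-h)*(n+1:ℝ)^2) * (1 / α k)) := by
    intro n k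
    have hεpos : (0:ℝ) < (1/(n+1:ℝ))^2 := by positivity
    have hN : (0:ℝ) < (n:ℝ)+1 := by positivity
    have h1 := hα k
    have := meas_ge_le_lintegral_div (μ := μ)
      (f := fun ω => ENNReal.ofReal ((X k ω - h)^2))
      (by fun_prop) (ε := ENNReal.ofReal ((1/(n+1:ℝ))^2))
      (ENNReal.ofReal_pos.mpr hεpos).ne' ENNReal.ofReal_ne_top
    rw [key k] at this
    refine this.trans ?_
    rw [← ENNReal.ofReal_div_of_pos hεpos]
    apply ENNReal.ofReal_le_ofReal
    have e : h*(1-h)/(α k + 1) / ((1/(n+1:ℝ))^2) = (h*(1-h)*(n+1:ℝ)^2)/(α k + 1) := by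
      field_simp
    rw [e, mul_one_div]
    exact div_le_div_of_nonneg_left (by positivity) h1 (by linarith)
  have hBC : ∀ n : ℕ, ∀ᵐ ω ∂μ, ∀ᶠ k in atTop, ω ∉ s n k := by
    intro n
    apply ae_eventually_notMem
    have hsum2 : Summable (fun k => (h*(1-h)*(n+1:ℝ)^2) * (1/α k)) := hsum.mul_left _
    have hnn : ∀ k, 0 ≤ (h*(1-h)*(n+1:ℝ)^2) * (1/α k) := fun k => by
      have := hα k; positivity
    have : (∑' k, μ (s n k)) ≤ ENNReal.ofReal (∑' k, (h*(1-h)*(n+1:ℝ)^2) * (1/α k)) := by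
      rw [ENNReal.ofReal_tsum_of_nonneg hnn hsum2]
      exact ENNReal.tsum_le_tsum (cheb n)
    exact (this.trans_lt ENNReal.ofReal_lt_top).ne
  filter_upwards [ae_all_iff.mpr hBC] with ω hω
  rw [Metric.tendsto_atTop]
  intro ε hε
  obtain ⟨n, hn⟩ := exists_nat_one_div_lt hε
  obtain ⟨N, hN2⟩ := eventually_atTop.mp (hω n)
  refine ⟨N, fun k hk => ?_⟩
  have h2 := hN2 k hk
  simp only [hs, mem_setOf_eq, not_le] at h2
  have hc : (0:ℝ) < (1/(n+1:ℝ))^2 := by positivity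
  have h3 : (X k ω - h)^2 < (1/(n+1:ℝ))^2 :=
    (ENNReal.ofReal_lt_ofReal_iff hc).mp h2
  have h4 : |X k ω - h| < 1/(n+1:ℝ) := by
    nlinarith [sq_abs (X k ω - h), abs_nonneg (X k ω - h),
      sq_nonneg (|X k ω - h| - 1/(n+1:ℝ)), (by positivity : (0:ℝ) < 1/(n+1:ℝ))]
  rw [Real.dist_eq]
  linarith
end

section
/- Let m ≥ 1 and let μ and ν be probability measures on ℝ^m with finite first moments, i.e. ∫‖x‖ dμ(x) < ∞ and ∫‖y‖ dν(y) < ∞, where ‖·‖ is the Euclidean norm. Then the energy distance d_E(μ, ν) = 2∫∫‖x − y‖ dμ(x) dν(y) − ∫∫‖x − x'‖ dμ(x) dμ(x') − ∫∫‖y − y'‖ dν(y) dν(y') satisfies d_E(μ, ν) ≥ 0. -/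
set_option maxHeartbeats 1000000

open MeasureTheory Set Real
open scoped RealInnerProductSpace

variable {m : ℕ}

local notation "E" => EuclideanSpace ℝ (Fin m)


noncomputable def g₀ : ℝ → ℝ := fun s => s ^ (-(3/2) : ℝ) * (1 - Real.exp (-s))

lemma g₀_meas : Measurable g₀ := by unfold g₀; fun_prop

lemma g₀_nonneg {s : ℝ} (hs : 0 < s) : 0 ≤ g₀ s := by
  apply mul_nonneg (Real.rpow_nonneg hs.le _)
  have : Real.exp (-s) ≤ 1 := Real.exp_le_one_iff.mpr (by linarith)
  linarith

lemma g₀_pos {s : ℝ} (hs : 0 < s) : 0 < g₀ s := by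
  apply mul_pos (Real.rpow_pos_of_pos hs _)
  have : Real.exp (-s) < 1 := Real.exp_lt_one_iff.mpr (by linarith)
  linarith

lemma g₀_int : IntegrableOn g₀ (Ioi 0) := by
  have h1 : IntegrableOn g₀ (Ioc 0 1) := by
    have hb : IntegrableOn (fun s : ℝ => s ^ (-(1/2) : ℝ)) (Ioc 0 1) := by
      have := intervalIntegral.intervalIntegrable_rpow' (a := 0) (b := 1)
        (r := (-(1/2) : ℝ)) (by norm_num)
      simpa [intervalIntegrable_iff_integrableOn_Ioc_of_le] using this
    refine hb.mono' g₀_meas.aestronglyMeasurable ?_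
    filter_upwards [ae_restrict_mem measurableSet_Ioc] with s hs
    have hs0 : 0 < s := hs.1
    rw [Real.norm_eq_abs, abs_of_nonneg (g₀_nonneg hs0)]
    have h2 : 1 - Real.exp (-s) ≤ s := by
      have := Real.add_one_le_exp (-s); linarith
    calc g₀ s ≤ s ^ (-(3/2) : ℝ) * s := by
          apply mul_le_mul_of_nonneg_left h2 (Real.rpow_nonneg hs0.le _)
      _ = s ^ (-(1/2) : ℝ) := by
          rw [show s ^ (-(3/2):ℝ) * s = s ^ (-(3/2):ℝ) * s ^ (1:ℝ) by rw [Real.rpow_one],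
            ← Real.rpow_add hs0]
          norm_num
  have h2 : IntegrableOn g₀ (Ioi 1) := by
    have hb : IntegrableOn (fun s : ℝ => s ^ (-(3/2) : ℝ)) (Ioi 1) :=
      integrableOn_Ioi_rpow_of_lt (by norm_num) one_pos
    refine hb.mono' g₀_meas.aestronglyMeasurable ?_
    filter_upwards [ae_restrict_mem measurableSet_Ioi] with s hs
    have hs0 : (0:ℝ) < s := lt_trans one_pos hs
    rw [Real.norm_eq_abs, abs_of_nonneg (g₀_nonneg hs0)]
    have he : 0 < Real.exp (-s) := Real.exp_pos _
    calc g₀ s ≤ s ^ (-(3/2) : ℝ) * 1 := by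
          apply mul_le_mul_of_nonneg_left (by linarith) (Real.rpow_nonneg hs0.le _)
      _ = s ^ (-(3/2) : ℝ) := mul_one _
  have : Ioi (0:ℝ) = Ioc 0 1 ∪ Ioi 1 := (Ioc_union_Ioi_eq_Ioi one_pos.le).symm
  rw [this]
  exact h1.union h2

noncomputable def I₀ : ℝ := ∫ s in Ioi (0:ℝ), g₀ s

lemma I₀_pos : 0 < I₀ := by
  rw [I₀, setIntegral_pos_iff_support_of_nonneg_ae]
  · have hsub : Ioi (0:ℝ) ⊆ Function.support g₀ ∩ Ioi 0 := by
      intro s hs; exact ⟨(g₀_pos hs).ne', hs⟩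
    calc (0:ENNReal) < volume (Ioi (0:ℝ)) := by simp
      _ ≤ _ := measure_mono hsub
  · filter_upwards [ae_restrict_mem measurableSet_Ioi] with s hs using g₀_nonneg hs
  · exact g₀_int

/-- scaled version -/
lemma scale_int {r : ℝ} (hr : 0 ≤ r) :
    IntegrableOn (fun s : ℝ => s ^ (-(3/2) : ℝ) * (1 - Real.exp (-(s * r ^ 2)))) (Ioi 0)
    ∧ ∫ s in Ioi (0:ℝ), s ^ (-(3/2) : ℝ) * (1 - Real.exp (-(s * r ^ 2))) = I₀ * r := by
  rcases eq_or_lt_of_le hr with h | hr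
  · constructor
    · apply (integrableOn_congr_fun (g := fun _ => (0:ℝ)) ?_ measurableSet_Ioi).mpr
        ((integrableOn_const_iff (C := (0:ℝ))).mpr (Or.inl (by simp)))
      intro s hs; simp [← h]
    · rw [← h]
      rw [setIntegral_congr_fun measurableSet_Ioi (g := fun _ => (0:ℝ)) (by intro s hs; simp)]
      simp
  · set c := r ^ 2 with hc
    have hc0 : 0 < c := by positivity
    have key : ∀ s ∈ Ioi (0:ℝ),
        s ^ (-(3/2) : ℝ) * (1 - Real.exp (-(s * c))) = (c ^ ((3:ℝ)/2) • g₀) (c * s) := by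
      intro s hs
      have hs0 : (0:ℝ) < s := hs
      simp only [Pi.smul_apply, smul_eq_mul, g₀]
      rw [Real.mul_rpow hc0.le hs0.le, mul_comm s c, ← mul_assoc, ← mul_assoc,
        ← Real.rpow_add hc0]
      norm_num
    have hint : IntegrableOn (fun s => (c ^ ((3:ℝ)/2) • g₀) (c * s)) (Ioi 0) := by
      rw [integrableOn_Ioi_comp_mul_left_iff _ _ hc0, mul_zero]
      exact (g₀_int.smul _)
    have hint' : IntegrableOn
        (fun s : ℝ => s ^ (-(3/2) : ℝ) * (1 - Real.exp (-(s * c)))) (Ioi 0) :=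
      (integrableOn_congr_fun key measurableSet_Ioi).mpr hint
    refine ⟨hint', ?_⟩
    rw [setIntegral_congr_fun measurableSet_Ioi key]
    rw [MeasureTheory.integral_comp_mul_left_Ioi _ _ hc0, mul_zero]
    simp only [Pi.smul_apply, smul_eq_mul]
    rw [integral_const_mul, ← I₀]
    have h1 : c⁻¹ * (c ^ ((3:ℝ)/2) * I₀) = (c⁻¹ * c ^ ((3:ℝ)/2)) * I₀ := by ring
    rw [h1, ← Real.rpow_neg_one c, ← Real.rpow_add hc0]
    have h2 : c ^ ((-1 + 3/2 : ℝ)) = r := by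
      rw [hc, ← Real.rpow_natCast r 2, ← Real.rpow_mul hr.le]
      norm_num
    rw [h2, mul_comm]



lemma cexp_eq_ofReal (b : ℝ) (w v : E) :
    Complex.exp (-(b:ℂ) * ‖v‖ ^ 2 + 1 * ⟪w, v⟫) =
      ((Real.exp (-b * ‖v‖ ^ 2 + ⟪w, v⟫) : ℝ) : ℂ) := by
  rw [Complex.ofReal_exp]
  congr 1
  push_cast
  ring

lemma gauss_integrable {b : ℝ} (hb : 0 < b) (w : E) :
    Integrable (fun v : E => Real.exp (-b * ‖v‖ ^ 2 + ⟪w, v⟫)) := by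
  have h := GaussianFourier.integrable_cexp_neg_mul_sq_norm_add (V := E)
    (b := (b : ℂ)) (by simpa using hb) 1 w
  have heq : (fun v : E => Complex.exp (-(b:ℂ) * ‖v‖ ^ 2 + 1 * ⟪w, v⟫)) =
      fun v : E => ((Real.exp (-b * ‖v‖ ^ 2 + ⟪w, v⟫) : ℝ) : ℂ) :=
    funext (cexp_eq_ofReal b w)
  rw [heq] at h
  exact h.re.congr (Filter.Eventually.of_forall fun v => Complex.ofReal_re _)

lemma gauss_integral {b : ℝ} (hb : 0 < b) (w : E) :
    ∫ v : E, Real.exp (-b * ‖v‖ ^ 2 + ⟪w, v⟫)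
      = (π / b) ^ ((m : ℝ) / 2) * Real.exp (‖w‖ ^ 2 / (4 * b)) := by
  have h := GaussianFourier.integral_cexp_neg_mul_sq_norm_add (V := E)
    (b := (b : ℂ)) (by simpa using hb) 1 w
  have heq : (fun v : E => Complex.exp (-(b:ℂ) * ‖v‖ ^ 2 + 1 * ⟪w, v⟫)) =
      fun v : E => ((Real.exp (-b * ‖v‖ ^ 2 + ⟪w, v⟫) : ℝ) : ℂ) :=
    funext (cexp_eq_ofReal b w)
  rw [heq] at h
  have hco : (∫ v : E, ((Real.exp (-b * ‖v‖ ^ 2 + ⟪w, v⟫) : ℝ) : ℂ))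
      = ((∫ v : E, Real.exp (-b * ‖v‖ ^ 2 + ⟪w, v⟫) : ℝ) : ℂ) := integral_ofReal
  rw [hco] at h
  rw [← Complex.ofReal_inj, h]
  have hd : ((Module.finrank ℝ (EuclideanSpace ℝ (Fin m)) : ℂ)) = ((m:ℕ) : ℂ) := by
    norm_num [finrank_euclideanSpace_fin]
  rw [hd, Complex.ofReal_mul, Complex.ofReal_cpow (by positivity : (0:ℝ) ≤ π / b),
    Complex.ofReal_exp]
  push_cast
  ring_nf







noncomputable def Φ (s : ℝ) (x z : EuclideanSpace ℝ (Fin m)) : ℝ :=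
  Real.exp (-(2 * s * ‖x‖ ^ 2) + ⟪x, z⟫)

noncomputable def G (s : ℝ) (z : EuclideanSpace ℝ (Fin m)) : ℝ :=
  Real.exp (-((4 * s)⁻¹ * ‖z‖ ^ 2))

lemma GΦΦ_eq {s : ℝ} (x y : E) :
    (fun z : E => G s z * (Φ s x z * Φ s y z)) =
      fun z : E => Real.exp (-(2 * s * ‖x‖ ^ 2) + -(2 * s * ‖y‖ ^ 2)) *
        Real.exp (-(4 * s)⁻¹ * ‖z‖ ^ 2 + ⟪x + y, z⟫) := by
  funext z
  rw [G, Φ, Φ, ← Real.exp_add, ← Real.exp_add, ← Real.exp_add, inner_add_left]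
  ring_nf

lemma GΦΦ_integrable {s : ℝ} (hs : 0 < s) (x y : E) :
    Integrable (fun z : E => G s z * (Φ s x z * Φ s y z)) := by
  rw [GΦΦ_eq]
  exact (gauss_integrable (by positivity) (x + y)).const_mul _

lemma GΦΦ_integral {s : ℝ} (hs : 0 < s) (x y : E) :
    ∫ z : E, G s z * (Φ s x z * Φ s y z)
      = (4 * π * s) ^ ((m : ℝ) / 2) * Real.exp (-(s * ‖x - y‖ ^ 2)) := by
  rw [GΦΦ_eq, integral_const_mul, gauss_integral (by positivity : (0:ℝ) < (4*s)⁻¹) (x+y)]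
  have h1 : π / (4 * s)⁻¹ = 4 * π * s := by field_simp
  have h2 : ‖x + y‖ ^ 2 / (4 * (4 * s)⁻¹) = s * ‖x + y‖ ^ 2 := by
    field_simp
  rw [h1, h2, ← mul_assoc, mul_comm _ ((4 * π * s) ^ ((m:ℝ)/2)), mul_assoc, ← Real.exp_add]
  congr 1
  have hxy : ‖x + y‖ ^ 2 = ‖x‖ ^ 2 + 2 * ⟪x, y⟫ + ‖y‖ ^ 2 := norm_add_sq_real x y
  have hxy' : ‖x - y‖ ^ 2 = ‖x‖ ^ 2 - 2 * ⟪x, y⟫ + ‖y‖ ^ 2 := norm_sub_sq_real x y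
  rw [hxy, hxy']
  ring



lemma Φ_cont (s : ℝ) : Continuous (fun q : (EuclideanSpace ℝ (Fin m)) × (EuclideanSpace ℝ (Fin m)) => Φ s q.1 q.2) := by
  apply Real.continuous_exp.comp
  apply Continuous.add
  · fun_prop
  · exact continuous_inner

variable (P Q : Measure (EuclideanSpace ℝ (Fin m))) [IsProbabilityMeasure P] [IsProbabilityMeasure Q]

lemma K_cont (s : ℝ) : Continuous (fun p : (EuclideanSpace ℝ (Fin m)) × (EuclideanSpace ℝ (Fin m)) => Real.exp (-(s * ‖p.1 - p.2‖ ^ 2))) := by fun_prop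

lemma K_int {s : ℝ} (hs : 0 < s) :
    Integrable (fun p : (EuclideanSpace ℝ (Fin m)) × (EuclideanSpace ℝ (Fin m)) =>
      Real.exp (-(s * ‖p.1 - p.2‖ ^ 2))) (P.prod Q) := by
  refine (integrable_const (1:ℝ)).mono' ((K_cont s).aestronglyMeasurable) ?_
  refine Filter.Eventually.of_forall fun p => ?_
  rw [Real.norm_eq_abs, abs_of_pos (Real.exp_pos _)]
  exact Real.exp_le_one_iff.mpr (neg_nonpos.mpr (by positivity))

lemma F_integrable {s : ℝ} (hs : 0 < s) :
    Integrable (fun q : ((EuclideanSpace ℝ (Fin m)) × (EuclideanSpace ℝ (Fin m))) × (EuclideanSpace ℝ (Fin m)) =>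
      G s q.2 * (Φ s q.1.1 q.2 * Φ s q.1.2 q.2)) ((P.prod Q).prod volume) := by
  have hcont : Continuous (fun q : ((EuclideanSpace ℝ (Fin m)) × (EuclideanSpace ℝ (Fin m))) × (EuclideanSpace ℝ (Fin m)) =>
      G s q.2 * (Φ s q.1.1 q.2 * Φ s q.1.2 q.2)) := by
    unfold G Φ
    have h0 : Continuous (fun q : ((EuclideanSpace ℝ (Fin m)) × (EuclideanSpace ℝ (Fin m))) × (EuclideanSpace ℝ (Fin m)) => ⟪q.1.1, q.2⟫) :=
      continuous_inner.comp (continuous_fst.fst.prodMk continuous_snd)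
    have h0' : Continuous (fun q : ((EuclideanSpace ℝ (Fin m)) × (EuclideanSpace ℝ (Fin m))) × (EuclideanSpace ℝ (Fin m)) => ⟪q.1.2, q.2⟫) :=
      continuous_inner.comp (continuous_fst.snd.prodMk continuous_snd)
    apply Continuous.mul (by fun_prop)
    exact ((Real.continuous_exp.comp ((by fun_prop : Continuous (fun q : ((EuclideanSpace ℝ (Fin m)) × (EuclideanSpace ℝ (Fin m))) × (EuclideanSpace ℝ (Fin m)) => -(2*s*‖q.1.1‖^2))).add h0))).mul
      ((Real.continuous_exp.comp ((by fun_prop : Continuous (fun q : ((EuclideanSpace ℝ (Fin m)) × (EuclideanSpace ℝ (Fin m))) × (EuclideanSpace ℝ (Fin m)) => -(2*s*‖q.1.2‖^2))).add h0')))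
  rw [integrable_prod_iff hcont.aestronglyMeasurable]
  constructor
  · exact Filter.Eventually.of_forall fun p => GΦΦ_integrable hs p.1 p.2
  · have heq : (fun p : (EuclideanSpace ℝ (Fin m)) × (EuclideanSpace ℝ (Fin m)) =>
        ∫ z, ‖G s z * (Φ s p.1 z * Φ s p.2 z)‖)
        = fun p => (4 * π * s) ^ ((m : ℝ) / 2) * Real.exp (-(s * ‖p.1 - p.2‖ ^ 2)) := by
      funext p
      rw [← GΦΦ_integral hs p.1 p.2]
      congr 1
      funext z
      rw [Real.norm_eq_abs, abs_of_nonneg]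
      unfold G Φ; positivity
    rw [heq]
    exact (K_int P Q hs).const_mul _

lemma double_rep {s : ℝ} (hs : 0 < s) :
    (4 * π * s) ^ ((m : ℝ) / 2) * ∫ x, ∫ y, Real.exp (-(s * ‖x - y‖ ^ 2)) ∂Q ∂P
      = ∫ z : E, G s z * ((∫ x, Φ s x z ∂P) * (∫ y, Φ s y z ∂Q)) := by
  have hswap := integral_integral_swap
    (f := fun (p : (EuclideanSpace ℝ (Fin m)) × (EuclideanSpace ℝ (Fin m))) (z : EuclideanSpace ℝ (Fin m)) =>
      G s z * (Φ s p.1 z * Φ s p.2 z)) (F_integrable P Q hs)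
  have hl : ∫ p, ∫ z, G s z * (Φ s p.1 z * Φ s p.2 z) ∂volume ∂(P.prod Q)
      = (4 * π * s) ^ ((m : ℝ) / 2) * ∫ x, ∫ y, Real.exp (-(s * ‖x - y‖ ^ 2)) ∂Q ∂P := by
    rw [show (fun p : (EuclideanSpace ℝ (Fin m)) × (EuclideanSpace ℝ (Fin m)) =>
        ∫ z, G s z * (Φ s p.1 z * Φ s p.2 z) ∂volume)
        = fun p => (4 * π * s) ^ ((m : ℝ) / 2) * Real.exp (-(s * ‖p.1 - p.2‖ ^ 2))
      from funext fun p => GΦΦ_integral hs p.1 p.2]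
    rw [integral_const_mul]
    congr 1
    exact integral_prod _ (K_int P Q hs)
  have hr : ∫ z, ∫ p, G s z * (Φ s p.1 z * Φ s p.2 z) ∂(P.prod Q) ∂volume
      = ∫ z : E, G s z * ((∫ x, Φ s x z ∂P) * (∫ y, Φ s y z ∂Q)) := by
    congr 1
    funext z
    rw [integral_const_mul]
    congr 1
    exact integral_prod_mul (μ := P) (ν := Q) (fun x => Φ s x z) (fun y => Φ s y z)
  rw [← hl, hswap, hr]

lemma GAA_integrable {s : ℝ} (hs : 0 < s) :
    Integrable (fun z : E => G s z * ((∫ x, Φ s x z ∂P) * (∫ y, Φ s y z ∂Q))) := by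
  have h := (F_integrable P Q hs).integral_prod_right
  refine h.congr (Filter.Eventually.of_forall fun z => ?_)
  show ∫ (p : E × E), G s z * (Φ s p.1 z * Φ s p.2 z) ∂(P.prod Q) = _
  rw [integral_const_mul]
  congr 1
  exact integral_prod_mul (μ := P) (ν := Q) (fun x => Φ s x z) (fun y => Φ s y z)







variable (P Q : Measure (EuclideanSpace ℝ (Fin m))) [IsProbabilityMeasure P] [IsProbabilityMeasure Q]







-- Part 5
lemma kernel_combo_nonneg (μ ν : Measure (EuclideanSpace ℝ (Fin m)))
    [IsProbabilityMeasure μ] [IsProbabilityMeasure ν] {s : ℝ} (hs : 0 < s) :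
    0 ≤ (∫ x, ∫ y, Real.exp (-(s * ‖x - y‖ ^ 2)) ∂μ ∂μ)
        + (∫ x, ∫ y, Real.exp (-(s * ‖x - y‖ ^ 2)) ∂ν ∂ν)
        - 2 * (∫ x, ∫ y, Real.exp (-(s * ‖x - y‖ ^ 2)) ∂ν ∂μ) := by
  have hc : (0:ℝ) < (4 * π * s) ^ ((m : ℝ) / 2) := by positivity
  have e1 := double_rep μ μ hs
  have e2 := double_rep ν ν hs
  have e3 := double_rep μ ν hs
  have i1 := GAA_integrable μ μ hs
  have i2 := GAA_integrable ν ν hs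
  have i3 := GAA_integrable μ ν hs
  have key : (4 * π * s) ^ ((m : ℝ) / 2) *
      ((∫ x, ∫ y, Real.exp (-(s * ‖x - y‖ ^ 2)) ∂μ ∂μ)
        + (∫ x, ∫ y, Real.exp (-(s * ‖x - y‖ ^ 2)) ∂ν ∂ν)
        - 2 * (∫ x, ∫ y, Real.exp (-(s * ‖x - y‖ ^ 2)) ∂ν ∂μ))
      = ∫ z : E, G s z * ((∫ x, Φ s x z ∂μ) - (∫ x, Φ s x z ∂ν)) ^ 2 := by
    have h5 : ∫ z : E, G s z * ((∫ x, Φ s x z ∂μ) - (∫ x, Φ s x z ∂ν)) ^ 2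
        = (∫ z : E, G s z * ((∫ x, Φ s x z ∂μ) * (∫ y, Φ s y z ∂μ)))
          + (∫ z : E, G s z * ((∫ x, Φ s x z ∂ν) * (∫ y, Φ s y z ∂ν)))
          - 2 * (∫ z : E, G s z * ((∫ x, Φ s x z ∂μ) * (∫ y, Φ s y z ∂ν))) := by
      have hsub := integral_sub (i1.add i2) (i3.const_mul 2)
      simp only [Pi.add_apply] at hsub
      rw [integral_add i1 i2, integral_const_mul] at hsub
      rw [← hsub]
      congr 1
      funext z
      ring
    rw [h5]
    linarith [e1, e2, e3]
  have hnn : 0 ≤ ∫ z : E, G s z * ((∫ x, Φ s x z ∂μ) - (∫ x, Φ s x z ∂ν)) ^ 2 := by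
    apply integral_nonneg
    intro z
    exact mul_nonneg (Real.exp_pos _).le (sq_nonneg _)
  rw [← key] at hnn
  exact nonneg_of_mul_nonneg_right hnn hc

-- Part 6
lemma dist_int (hP : Integrable (fun x => ‖x‖) P) (hQ : Integrable (fun y => ‖y‖) Q) :
    Integrable (fun p : (EuclideanSpace ℝ (Fin m)) × (EuclideanSpace ℝ (Fin m)) => ‖p.1 - p.2‖) (P.prod Q) := by
  have hm1 : Measure.map Prod.fst (P.prod Q) = P := by
    rw [Measure.map_fst_prod]; simp
  have hm2 : Measure.map Prod.snd (P.prod Q) = Q := by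
    rw [Measure.map_snd_prod]; simp
  have h1 : Integrable (fun p : (EuclideanSpace ℝ (Fin m)) × (EuclideanSpace ℝ (Fin m)) => ‖p.1‖) (P.prod Q) := by
    have ha : AEStronglyMeasurable (fun x : EuclideanSpace ℝ (Fin m) => ‖x‖)
        (Measure.map Prod.fst (P.prod Q)) := by
      rw [hm1]; exact hP.aestronglyMeasurable
    have hi : Integrable (fun x : EuclideanSpace ℝ (Fin m) => ‖x‖)
        (Measure.map Prod.fst (P.prod Q)) := by rw [hm1]; exact hP
    exact (integrable_map_measure ha measurable_fst.aemeasurable).mp hi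
  have h2 : Integrable (fun p : (EuclideanSpace ℝ (Fin m)) × (EuclideanSpace ℝ (Fin m)) => ‖p.2‖) (P.prod Q) := by
    have ha : AEStronglyMeasurable (fun x : EuclideanSpace ℝ (Fin m) => ‖x‖)
        (Measure.map Prod.snd (P.prod Q)) := by
      rw [hm2]; exact hQ.aestronglyMeasurable
    have hi : Integrable (fun x : EuclideanSpace ℝ (Fin m) => ‖x‖)
        (Measure.map Prod.snd (P.prod Q)) := by rw [hm2]; exact hQ
    exact (integrable_map_measure ha measurable_snd.aemeasurable).mp hi
  refine (h1.add h2).mono' (Continuous.aestronglyMeasurable (by fun_prop)) ?_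
  refine Filter.Eventually.of_forall fun p => ?_
  rw [norm_norm]
  exact norm_sub_le _ _

lemma s_fubini (hP : Integrable (fun x => ‖x‖) P) (hQ : Integrable (fun y => ‖y‖) Q) :
    IntegrableOn (fun s : ℝ => s ^ (-(3/2) : ℝ) *
        (1 - ∫ x, ∫ y, Real.exp (-(s * ‖x - y‖ ^ 2)) ∂Q ∂P)) (Ioi 0)
    ∧ ∫ s in Ioi (0:ℝ), s ^ (-(3/2) : ℝ) *
        (1 - ∫ x, ∫ y, Real.exp (-(s * ‖x - y‖ ^ 2)) ∂Q ∂P)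
      = I₀ * ∫ x, ∫ y, ‖x - y‖ ∂Q ∂P := by
  classical
  set f : ((EuclideanSpace ℝ (Fin m)) × (EuclideanSpace ℝ (Fin m))) → ℝ → ℝ :=
    fun p s => s ^ (-(3/2) : ℝ) * (1 - Real.exp (-(s * ‖p.1 - p.2‖ ^ 2))) with hf
  have hW := dist_int P Q hP hQ
  have hmeas : AEStronglyMeasurable (Function.uncurry f)
      ((P.prod Q).prod (volume.restrict (Ioi 0))) := by
    apply Measurable.aestronglyMeasurable
    apply Measurable.mul
    · fun_prop
    · fun_prop
  have hslice : ∀ p : (EuclideanSpace ℝ (Fin m)) × (EuclideanSpace ℝ (Fin m)),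
      IntegrableOn (fun s => f p s) (Ioi 0) :=
    fun p => (scale_int (norm_nonneg (p.1 - p.2))).1
  have hfnn : ∀ (p : (EuclideanSpace ℝ (Fin m)) × (EuclideanSpace ℝ (Fin m))) {s : ℝ},
      s ∈ Ioi (0:ℝ) → 0 ≤ f p s := by
    intro p s hs
    apply mul_nonneg (Real.rpow_nonneg (le_of_lt hs) _)
    have hsle : (0:ℝ) ≤ s * ‖p.1 - p.2‖ ^ 2 := mul_nonneg (le_of_lt hs) (sq_nonneg _)
    have : Real.exp (-(s * ‖p.1 - p.2‖ ^ 2)) ≤ 1 :=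
      Real.exp_le_one_iff.mpr (neg_nonpos.mpr hsle)
    linarith
  have hnorm : (fun p : (EuclideanSpace ℝ (Fin m)) × (EuclideanSpace ℝ (Fin m)) =>
      ∫ s in Ioi (0:ℝ), ‖Function.uncurry f (p, s)‖) = fun p => I₀ * ‖p.1 - p.2‖ := by
    funext p
    rw [← (scale_int (norm_nonneg (p.1 - p.2))).2]
    refine setIntegral_congr_fun measurableSet_Ioi fun s hs => ?_
    rw [Real.norm_eq_abs]
    exact abs_of_nonneg (hfnn p hs)
  have hint : Integrable (Function.uncurry f) ((P.prod Q).prod (volume.restrict (Ioi 0))) := by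
    rw [integrable_prod_iff hmeas]
    exact ⟨Filter.Eventually.of_forall hslice, by rw [hnorm]; exact hW.const_mul I₀⟩
  have hswap := integral_integral_swap hint
  have hl : ∫ p, ∫ s, f p s ∂(volume.restrict (Ioi 0)) ∂(P.prod Q)
      = I₀ * ∫ x, ∫ y, ‖x - y‖ ∂Q ∂P := by
    rw [show (fun p : (EuclideanSpace ℝ (Fin m)) × (EuclideanSpace ℝ (Fin m)) =>
        ∫ s, f p s ∂(volume.restrict (Ioi 0))) = fun p => I₀ * ‖p.1 - p.2‖
      from funext fun p => (scale_int (norm_nonneg (p.1 - p.2))).2]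
    rw [integral_const_mul]
    congr 1
    exact (integral_integral (f := fun x y => ‖x - y‖) hW).symm
  have hr : ∀ s ∈ Ioi (0:ℝ), ∫ p, f p s ∂(P.prod Q)
      = s ^ (-(3/2) : ℝ) * (1 - ∫ x, ∫ y, Real.exp (-(s * ‖x - y‖ ^ 2)) ∂Q ∂P) := by
    intro s hs
    rw [hf]
    simp only
    rw [integral_const_mul]
    congr 1
    rw [integral_sub (integrable_const 1) (K_int P Q hs)]
    simp only [integral_const, probReal_univ, measure_univ, ENNReal.toReal_one, smul_eq_mul, one_mul]
    congr 1
    exact (integral_integral (f := fun x y => Real.exp (-(s * ‖x - y‖ ^ 2))) (K_int P Q hs)).symm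
  constructor
  · have := hint.integral_prod_right
    refine this.congr ?_
    filter_upwards [ae_restrict_mem measurableSet_Ioi] with s hs
    exact hr s hs
  · rw [← setIntegral_congr_fun measurableSet_Ioi hr, ← hswap, hl]

/-- Nonnegativity of the energy distance between probability measures on `ℝ^m`
with finite first moments. -/
theorem energy_distance_nonneg
    (m : ℕ) (hm : 1 ≤ m)
    (μ ν : Measure (EuclideanSpace ℝ (Fin m)))
    [IsProbabilityMeasure μ] [IsProbabilityMeasure ν]
    (hμ : Integrable (fun x => ‖x‖) μ) (hν : Integrable (fun y => ‖y‖) ν) :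
    0 ≤ 2 * ∫ x, ∫ y, ‖x - y‖ ∂ν ∂μ
        - ∫ x, ∫ x', ‖x - x'‖ ∂μ ∂μ
        - ∫ y, ∫ y', ‖y - y'‖ ∂ν ∂ν := by
  have h1 := s_fubini μ ν hμ hν
  have h2 := s_fubini μ μ hμ hμ
  have h3 := s_fubini ν ν hν hν
  have key : I₀ * (2 * ∫ x, ∫ y, ‖x - y‖ ∂ν ∂μ
        - ∫ x, ∫ x', ‖x - x'‖ ∂μ ∂μ
        - ∫ y, ∫ y', ‖y - y'‖ ∂ν ∂ν)
      = ∫ s in Ioi (0:ℝ),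
          (2 * (s ^ (-(3/2) : ℝ) * (1 - ∫ x, ∫ y, Real.exp (-(s * ‖x - y‖ ^ 2)) ∂ν ∂μ))
          - s ^ (-(3/2) : ℝ) * (1 - ∫ x, ∫ y, Real.exp (-(s * ‖x - y‖ ^ 2)) ∂μ ∂μ)
          - s ^ (-(3/2) : ℝ) * (1 - ∫ x, ∫ y, Real.exp (-(s * ‖x - y‖ ^ 2)) ∂ν ∂ν)) := by
    have h12 : IntegrableOn (fun s : ℝ =>
        2 * (s ^ (-(3/2) : ℝ) * (1 - ∫ x, ∫ y, Real.exp (-(s * ‖x - y‖ ^ 2)) ∂ν ∂μ))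
        - s ^ (-(3/2) : ℝ) * (1 - ∫ x, ∫ y, Real.exp (-(s * ‖x - y‖ ^ 2)) ∂μ ∂μ)) (Ioi 0) :=
      (h1.1.const_mul 2).sub h2.1
    rw [integral_sub h12 h3.1, integral_sub (h1.1.const_mul 2) h2.1,
      integral_const_mul, h1.2, h2.2, h3.2]
    ring
  have hnn : 0 ≤ ∫ s in Ioi (0:ℝ),
          (2 * (s ^ (-(3/2) : ℝ) * (1 - ∫ x, ∫ y, Real.exp (-(s * ‖x - y‖ ^ 2)) ∂ν ∂μ))
          - s ^ (-(3/2) : ℝ) * (1 - ∫ x, ∫ y, Real.exp (-(s * ‖x - y‖ ^ 2)) ∂μ ∂μ)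
          - s ^ (-(3/2) : ℝ) * (1 - ∫ x, ∫ y, Real.exp (-(s * ‖x - y‖ ^ 2)) ∂ν ∂ν)) := by
    apply setIntegral_nonneg measurableSet_Ioi
    intro s hs
    have hcombo := kernel_combo_nonneg μ ν hs
    have hpt : 2 * (s ^ (-(3/2) : ℝ) * (1 - ∫ x, ∫ y, Real.exp (-(s * ‖x - y‖ ^ 2)) ∂ν ∂μ))
          - s ^ (-(3/2) : ℝ) * (1 - ∫ x, ∫ y, Real.exp (-(s * ‖x - y‖ ^ 2)) ∂μ ∂μ)
          - s ^ (-(3/2) : ℝ) * (1 - ∫ x, ∫ y, Real.exp (-(s * ‖x - y‖ ^ 2)) ∂ν ∂ν)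
        = s ^ (-(3/2) : ℝ) * ((∫ x, ∫ y, Real.exp (-(s * ‖x - y‖ ^ 2)) ∂μ ∂μ)
            + (∫ x, ∫ y, Real.exp (-(s * ‖x - y‖ ^ 2)) ∂ν ∂ν)
            - 2 * (∫ x, ∫ y, Real.exp (-(s * ‖x - y‖ ^ 2)) ∂ν ∂μ)) := by ring
    rw [hpt]
    exact mul_nonneg (Real.rpow_nonneg (le_of_lt hs) _) hcombo
  rw [← key] at hnn
  exact nonneg_of_mul_nonneg_right hnn I₀_pos
end
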